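/- Let p, q, r > 0 with 1/r = 1/p + 1/q. Suppose f, g, h : [0,∞) → [0,∞) satisfy h(t₁+t₂) ≤ f(t₁)g(t₂) for all t₁, t₂ ≥ 0, and suppose sup_{t>0} t^(1/p) f(t) ≤ 1 and sup_{t>0} t^(1/q) g(t) ≤ 1. Then for all t > 0, h(t) ≤ ((p+q)^(1/p+1/q)/(q^(1/p) p^(1/q))) · t^(-1/r). -/

import Mathlib

theorem stmt9 (p q r : ℝ) (hp : 0 < p) (hq : 0 < q) (hr : 0 < r)
    (h : 1/r = 1/p + 1/q)
    (f g h' : ℝ → ℝ)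
    (hf0 : ∀ t, 0 ≤ t → 0 ≤ f t) (hg0 : ∀ t, 0 ≤ t → 0 ≤ g t)
    (hh0 : ∀ t, 0 ≤ t → 0 ≤ h' t)
    (hsub : ∀ t₁ t₂ : ℝ, 0 ≤ t₁ → 0 ≤ t₂ → h' (t₁ + t₂) ≤ f t₁ * g t₂)
    (hfA : ∀ t : ℝ, 0 < t → t ^ (1/p) * f t ≤ 1)
    (hgB : ∀ t : ℝ, 0 < t → t ^ (1/q) * g t ≤ 1) :
    ∀ t : ℝ, 0 < t →
      h' t ≤ ((p + q) ^ (1/p + 1/q) / (q ^ (1/p) * p ^ (1/q))) * t ^ (-(1/r)) := by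
  intro t ht
  have hpq : 0 < p + q := by linarith
  set t₁ := (q / (p + q)) * t with ht₁def
  set t₂ := (p / (p + q)) * t with ht₂def
  have ht₁ : 0 < t₁ := by positivity
  have ht₂ : 0 < t₂ := by positivity
  have hsum : t₁ + t₂ = t := by
    rw [ht₁def, ht₂def, div_mul_eq_mul_div, div_mul_eq_mul_div, ← add_div, div_eq_iff hpq.ne']
    ring
  have hf : f t₁ ≤ t₁ ^ (-(1/p)) := by
    have h1 := hfA t₁ ht₁
    have hpow : (0:ℝ) < t₁ ^ (1/p) := Real.rpow_pos_of_pos ht₁ _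
    rw [Real.rpow_neg ht₁.le]
    nlinarith [mul_inv_cancel₀ hpow.ne']
  have hg : g t₂ ≤ t₂ ^ (-(1/q)) := by
    have h1 := hgB t₂ ht₂
    have hpow : (0:ℝ) < t₂ ^ (1/q) := Real.rpow_pos_of_pos ht₂ _
    rw [Real.rpow_neg ht₂.le]
    nlinarith [mul_inv_cancel₀ hpow.ne']
  have key : h' t ≤ t₁ ^ (-(1/p)) * t₂ ^ (-(1/q)) := by
    calc h' t = h' (t₁ + t₂) := by rw [hsum]
      _ ≤ f t₁ * g t₂ := hsub t₁ t₂ ht₁.le ht₂.le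
      _ ≤ t₁ ^ (-(1/p)) * t₂ ^ (-(1/q)) :=
          mul_le_mul hf hg (hg0 t₂ ht₂.le) (Real.rpow_nonneg ht₁.le _)
  refine key.trans_eq ?_
  rw [ht₁def, ht₂def, h]
  rw [Real.mul_rpow (by positivity) ht.le, Real.mul_rpow (by positivity) ht.le,
    Real.div_rpow hq.le hpq.le, Real.div_rpow hp.le hpq.le, neg_add,
    Real.rpow_add ht, Real.rpow_add hpq,
    Real.rpow_neg hq.le, Real.rpow_neg hpq.le, Real.rpow_neg hp.le]
  have h1 : (0:ℝ) < q ^ (1/p) := Real.rpow_pos_of_pos hq _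
  have h2 : (0:ℝ) < p ^ (1/q) := Real.rpow_pos_of_pos hp _
  have h3 : (0:ℝ) < (p+q) ^ (1/p) := Real.rpow_pos_of_pos hpq _
  have h4 : (0:ℝ) < (p+q) ^ (1/q) := Real.rpow_pos_of_pos hpq _
  field_simp
  have e2 : (p+q) ^ (1/q) * (p+q) ^ (-1/q) = 1 := by
    rw [← Real.rpow_add hpq, show (1:ℝ)/q + -1/q = 0 by ring, Real.rpow_zero]
  have e3 : (p+q) ^ (-(1/q)) * (p+q) ^ (1/q) = 1 := by
    rw [← Real.rpow_add hpq, neg_add_cancel, Real.rpow_zero]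
  linear_combination -e3
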